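/- Let M ∈ ℝ^{m×n} be partitioned in blocks, let G ∈ ℝ^{m×s}, S ∈ ℝ^{s×n} satisfy ‖M − GS‖₂ ≤ e_s, let G_A be the top s rows of G and S_A the first s columns of S. Assume: (1) σ_s(GS) > 0; (2) there is γ ≥ 1 with σ_s(G)·σ_s(S) = σ_s(GS)/γ; (3) there is β ≥ 1 with σ_s(G_A) ≥ σ_s(G)/β and σ_s(S_A) ≥ σ_s(S)/β. Then (σ_s(M) − e_s)/(β²γ) − e_s − σ_{s+1}(M) ≤ σ_s(A_lg), where A_lg is the top-left s×s block of the best rank-s approximation M_lg of M. -/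

import Mathlib

open Matrix

/-- `sv A k` is the `k`-th largest singular value (1-indexed) of the real matrix `A`,
computed as the `k`-th largest square root of an eigenvalue of `Aᵀ * A`. -/
noncomputable def sv {p q : ℕ} (A : Matrix (Fin p) (Fin q) ℝ) (k : ℕ) : ℝ :=
  if h : q - k < q then
    (fun i : Fin q => Real.sqrt ((Matrix.isHermitian_conjTranspose_mul_self A).eigenvalues i))
      (Tuple.sort (fun i : Fin q =>
        Real.sqrt ((Matrix.isHermitian_conjTranspose_mul_self A).eigenvalues i)) ⟨q - k, h⟩)
  else 0

namespace SVP
open Finset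

variable {p q : ℕ}

def toE {p : ℕ} (x : Fin p → ℝ) : EuclideanSpace ℝ (Fin p) := WithLp.toLp 2 x

def nsq {p : ℕ} (x : Fin p → ℝ) : ℝ := ∑ i, (x i)^2

lemma nsq_nonneg (x : Fin p → ℝ) : 0 ≤ nsq x := Finset.sum_nonneg fun i _ => sq_nonneg _

noncomputable def nrm {p : ℕ} (x : Fin p → ℝ) : ℝ := Real.sqrt (nsq x)

lemma nrm_nonneg (x : Fin p → ℝ) : 0 ≤ nrm x := Real.sqrt_nonneg _

lemma nrm_eq_norm (x : Fin p → ℝ) : nrm x = ‖toE x‖ := by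
  rw [EuclideanSpace.norm_eq]
  simp [nrm, nsq, toE, Real.norm_eq_abs, sq_abs]

lemma sq_nrm (x : Fin p → ℝ) : nrm x ^ 2 = nsq x := Real.sq_sqrt (nsq_nonneg x)

lemma nrm_add_le (x y : Fin p → ℝ) : nrm (x + y) ≤ nrm x + nrm y := by
  rw [nrm_eq_norm, nrm_eq_norm, nrm_eq_norm]
  have htoE : toE (x + y) = toE x + toE y := rfl
  rw [htoE]
  exact norm_add_le (toE x) (toE y)

lemma nrm_neg (x : Fin p → ℝ) : nrm (-x) = nrm x := by simp [nrm, nsq]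

lemma nrm_pos_of_ne_zero {x : Fin p → ℝ} (hx : x ≠ 0) : 0 < nrm x := by
  rcases Function.ne_iff.1 hx with ⟨i, hi⟩
  have h1 : 0 < nsq x := by
    have : (0:ℝ) < (x i)^2 := pow_two_pos_of_ne_zero hi
    exact lt_of_lt_of_le this (Finset.single_le_sum (fun j _ => sq_nonneg (x j)) (mem_univ i))
  exact Real.sqrt_pos.2 h1

lemma nrm_le_of_nsq_le {x : Fin p → ℝ} {a : ℝ} (ha : 0 ≤ a) (h : nsq x ≤ a^2) : nrm x ≤ a := by
  rw [nrm, show a = Real.sqrt (a^2) from (Real.sqrt_sq ha).symm]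
  exact Real.sqrt_le_sqrt h

lemma le_nrm_of_le_nsq {x : Fin p → ℝ} {a : ℝ} (ha : 0 ≤ a) (h : a^2 ≤ nsq x) : a ≤ nrm x := by
  rw [nrm, show a = Real.sqrt (a^2) from (Real.sqrt_sq ha).symm]
  exact Real.sqrt_le_sqrt h

/-! ### eigen data of `Aᵀ * A` -/

noncomputable def evals (A : Matrix (Fin p) (Fin q) ℝ) : Fin q → ℝ :=
  (Matrix.isHermitian_conjTranspose_mul_self A).eigenvalues

noncomputable def evecs (A : Matrix (Fin p) (Fin q) ℝ) :
    OrthonormalBasis (Fin q) ℝ (EuclideanSpace ℝ (Fin q)) :=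
  (Matrix.isHermitian_conjTranspose_mul_self A).eigenvectorBasis

noncomputable def svf (A : Matrix (Fin p) (Fin q) ℝ) : Fin q → ℝ := fun i => Real.sqrt (evals A i)

noncomputable def coeff (A : Matrix (Fin p) (Fin q) ℝ) (v : Fin q → ℝ) : Fin q → ℝ :=
  fun j => (evecs A).repr (toE v) j

lemma sv_def (A : Matrix (Fin p) (Fin q) ℝ) (k : ℕ) :
    sv A k = if h : q - k < q then svf A (Tuple.sort (svf A) ⟨q - k, h⟩) else 0 := rfl

lemma evals_nonneg (A : Matrix (Fin p) (Fin q) ℝ) (j : Fin q) : 0 ≤ evals A j :=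
  (Matrix.posSemidef_conjTranspose_mul_self A).eigenvalues_nonneg j

lemma svf_nonneg (A : Matrix (Fin p) (Fin q) ℝ) (j : Fin q) : 0 ≤ svf A j := Real.sqrt_nonneg _

lemma sq_svf (A : Matrix (Fin p) (Fin q) ℝ) (j : Fin q) : svf A j ^ 2 = evals A j :=
  Real.sq_sqrt (evals_nonneg A j)

lemma sv_nonneg (A : Matrix (Fin p) (Fin q) ℝ) (k : ℕ) : 0 ≤ sv A k := by
  rw [sv_def]
  split
  · exact svf_nonneg A _
  · exact le_refl 0

lemma dot_eq_sum_coeff (A : Matrix (Fin p) (Fin q) ℝ) (x y : Fin q → ℝ) :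
    x ⬝ᵥ y = ∑ j, coeff A x j * coeff A y j := by
  have h : (inner ℝ ((evecs A).repr (toE x)) ((evecs A).repr (toE y)) : ℝ)
      = ∑ j, coeff A x j * coeff A y j := by
    simp only [PiLp.inner_apply, RCLike.inner_apply, coeff, starRingEnd_apply, star_trivial, mul_comm]
  rw [← h]
  simp [PiLp.inner_apply, RCLike.inner_apply, toE, dotProduct, mul_comm]

lemma nsq_eq_sum_coeff (A : Matrix (Fin p) (Fin q) ℝ) (v : Fin q → ℝ) :
    nsq v = ∑ j, (coeff A v j)^2 := by
  have := dot_eq_sum_coeff A v v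
  simpa [dotProduct, nsq, pow_two] using this

lemma nsq_mulVec_dot (A : Matrix (Fin p) (Fin q) ℝ) (v : Fin q → ℝ) :
    nsq (A *ᵥ v) = v ⬝ᵥ ((Aᴴ * A) *ᵥ v) := by
  rw [Matrix.conjTranspose_eq_transpose_of_trivial]
  rw [← Matrix.mulVec_mulVec, Matrix.dotProduct_mulVec, Matrix.vecMul_transpose]
  simp [nsq, dotProduct, pow_two]

lemma coeff_H (A : Matrix (Fin p) (Fin q) ℝ) (v : Fin q → ℝ) (j : Fin q) :
    coeff A ((Aᴴ * A) *ᵥ v) j = evals A j * coeff A v j := by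
  have hdot : ∀ x : Fin q → ℝ, coeff A x j = ⇑((evecs A) j) ⬝ᵥ x := by
    intro x
    rw [coeff, (evecs A).repr_apply_apply]
    simp [PiLp.inner_apply, RCLike.inner_apply, toE, dotProduct, mul_comm]
  rw [hdot, hdot]
  have hsymm : (Aᴴ * A)ᵀ = Aᴴ * A := by
    rw [Matrix.conjTranspose_eq_transpose_of_trivial, Matrix.transpose_mul,
      Matrix.transpose_transpose]
  rw [Matrix.dotProduct_mulVec]
  have heq : ⇑(evecs A j) ᵥ* (Aᴴ * A) = (Aᴴ * A) *ᵥ ⇑(evecs A j) := by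
    conv_lhs => rw [← hsymm]
    exact Matrix.vecMul_transpose _ _
  have hev : (Aᴴ * A) *ᵥ ⇑(evecs A j) = evals A j • ⇑(evecs A j) :=
    (Matrix.isHermitian_conjTranspose_mul_self A).mulVec_eigenvectorBasis j
  rw [heq, hev]
  simp [smul_dotProduct, smul_eq_mul]

lemma nsq_mulVec (A : Matrix (Fin p) (Fin q) ℝ) (v : Fin q → ℝ) :
    nsq (A *ᵥ v) = ∑ j, evals A j * (coeff A v j)^2 := by
  rw [nsq_mulVec_dot, dot_eq_sum_coeff A]
  refine Finset.sum_congr rfl fun j _ => ?_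
  rw [coeff_H]
  ring

end SVP

namespace SVP2
open Matrix Finset SVP

variable {p q : ℕ}

lemma svf_le_sv_one (A : Matrix (Fin p) (Fin q) ℝ) (hq : 1 ≤ q) (j : Fin q) :
    svf A j ≤ sv A 1 := by
  have h : q - 1 < q := by omega
  rw [sv_def, dif_pos h]
  have hmono := Tuple.monotone_sort (svf A)
  have hj : j = Tuple.sort (svf A) ((Tuple.sort (svf A)).symm j) := by simp
  rw [hj]
  exact hmono (by
    show ((Tuple.sort (svf A)).symm j : ℕ) ≤ q - 1
    omega)

lemma sv_antitone (A : Matrix (Fin p) (Fin q) ℝ) {k k' : ℕ} (hk : 1 ≤ k) (hkk : k ≤ k') :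
    sv A k' ≤ sv A k := by
  rcases Nat.eq_zero_or_pos q with hq | hq
  · subst hq
    rw [sv_def, sv_def]
    simp
  · have h1 : q - k < q := by omega
    have h2 : q - k' < q := by omega
    rw [sv_def, sv_def, dif_pos h1, dif_pos h2]
    exact Tuple.monotone_sort (svf A) (by
      show q - k' ≤ q - k
      omega)

lemma sv_q_le_svf (A : Matrix (Fin p) (Fin q) ℝ) (hq : 1 ≤ q) (j : Fin q) :
    sv A q ≤ svf A j := by
  have h : q - q < q := by omega
  rw [sv_def, dif_pos h]
  have hj : j = Tuple.sort (svf A) ((Tuple.sort (svf A)).symm j) := by simp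
  conv_rhs => rw [hj]
  exact Tuple.monotone_sort (svf A) (by
    show q - q ≤ ((Tuple.sort (svf A)).symm j : ℕ)
    omega)

lemma nsq_mulVec_le (A : Matrix (Fin p) (Fin q) ℝ) (hq : 1 ≤ q) (v : Fin q → ℝ) :
    nsq (A *ᵥ v) ≤ (sv A 1)^2 * nsq v := by
  rw [nsq_mulVec, nsq_eq_sum_coeff A v, Finset.mul_sum]
  refine Finset.sum_le_sum fun j _ => ?_
  have h1 : evals A j ≤ (sv A 1)^2 := by
    rw [← sq_svf]
    exact pow_le_pow_left₀ (svf_nonneg A j) (svf_le_sv_one A hq j) 2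
  exact mul_le_mul_of_nonneg_right h1 (sq_nonneg _)

lemma nrm_mulVec_le (A : Matrix (Fin p) (Fin q) ℝ) (hq : 1 ≤ q) (v : Fin q → ℝ) :
    nrm (A *ᵥ v) ≤ sv A 1 * nrm v := by
  refine nrm_le_of_nsq_le (mul_nonneg (sv_nonneg A 1) (nrm_nonneg v)) ?_
  rw [mul_pow, sq_nrm]
  exact nsq_mulVec_le A hq v

lemma sv_q_nrm_le (A : Matrix (Fin p) (Fin q) ℝ) (hq : 1 ≤ q) (v : Fin q → ℝ) :
    sv A q * nrm v ≤ nrm (A *ᵥ v) := by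
  refine le_nrm_of_le_nsq (mul_nonneg (sv_nonneg A q) (nrm_nonneg v)) ?_
  rw [mul_pow, sq_nrm]
  rw [nsq_mulVec, nsq_eq_sum_coeff A v, Finset.mul_sum]
  refine Finset.sum_le_sum fun j _ => ?_
  have h1 : (sv A q)^2 ≤ evals A j := by
    rw [← sq_svf]
    exact pow_le_pow_left₀ (sv_nonneg A q) (sv_q_le_svf A hq j) 2
  exact mul_le_mul_of_nonneg_right h1 (sq_nonneg _)

lemma exists_unit (A : Matrix (Fin p) (Fin q) ℝ) (k : ℕ) (hk1 : 1 ≤ k) (hkq : k ≤ q) :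
    ∃ v : Fin q → ℝ, nrm v = 1 ∧ nrm (A *ᵥ v) = sv A k := by
  have h : q - k < q := by omega
  set i : Fin q := Tuple.sort (svf A) ⟨q - k, h⟩ with hi
  refine ⟨⇑((evecs A) i), ?_, ?_⟩
  · have hco : ∀ j, coeff A (⇑((evecs A) i)) j = if j = i then 1 else 0 := by
      intro j
      have : toE (⇑((evecs A) i)) = (evecs A) i := rfl
      rw [coeff, this, (evecs A).repr_self]
      simp [EuclideanSpace.single_apply]
    rw [nrm, nsq_eq_sum_coeff A]
    simp [hco]
  · have hco : ∀ j, coeff A (⇑((evecs A) i)) j = if j = i then 1 else 0 := by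
      intro j
      have : toE (⇑((evecs A) i)) = (evecs A) i := rfl
      rw [coeff, this, (evecs A).repr_self]
      simp [EuclideanSpace.single_apply]
    rw [nrm, nsq_mulVec]
    have : ∑ j, evals A j * (coeff A (⇑((evecs A) i)) j)^2 = evals A i := by
      rw [Finset.sum_eq_single i]
      · simp [hco]
      · intro b _ hb
        simp [hco, hb]
      · simp
    rw [this, sv_def, dif_pos h]
    rfl

lemma sv_one_triangle (A B : Matrix (Fin p) (Fin q) ℝ) (hq : 1 ≤ q) :
    sv (A + B) 1 ≤ sv A 1 + sv B 1 := by
  obtain ⟨v, hv1, hv2⟩ := exists_unit (A + B) 1 le_rfl hq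
  rw [← hv2, Matrix.add_mulVec]
  calc nrm (A *ᵥ v + B *ᵥ v) ≤ nrm (A *ᵥ v) + nrm (B *ᵥ v) := nrm_add_le _ _
  _ ≤ sv A 1 * nrm v + sv B 1 * nrm v := add_le_add (nrm_mulVec_le A hq v) (nrm_mulVec_le B hq v)
  _ = sv A 1 + sv B 1 := by rw [hv1]; ring

lemma sv_smin_mul (P Q : Matrix (Fin q) (Fin q) ℝ) (hq : 1 ≤ q) :
    sv P q * sv Q q ≤ sv (P * Q) q := by
  obtain ⟨v, hv1, hv2⟩ := exists_unit (P * Q) q hq le_rfl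
  have hmm : (P * Q) *ᵥ v = P *ᵥ (Q *ᵥ v) := (Matrix.mulVec_mulVec _ _ _).symm
  calc sv P q * sv Q q = sv P q * (sv Q q * nrm v) := by rw [hv1]; ring
  _ ≤ sv P q * nrm (Q *ᵥ v) :=
      mul_le_mul_of_nonneg_left (sv_q_nrm_le Q hq v) (sv_nonneg P q)
  _ ≤ nrm (P *ᵥ (Q *ᵥ v)) := sv_q_nrm_le P hq _
  _ = sv (P * Q) q := by rw [← hmm, hv2]

lemma sv_smin_sub_le (X Y : Matrix (Fin q) (Fin q) ℝ) (hq : 1 ≤ q) :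
    sv Y q ≤ sv X q + sv (X - Y) 1 := by
  obtain ⟨v, hv1, hv2⟩ := exists_unit X q hq le_rfl
  have hY : Y *ᵥ v = X *ᵥ v + (-((X - Y) *ᵥ v)) := by
    rw [Matrix.sub_mulVec]; abel
  calc sv Y q = sv Y q * nrm v := by rw [hv1, mul_one]
  _ ≤ nrm (Y *ᵥ v) := sv_q_nrm_le Y hq v
  _ ≤ nrm (X *ᵥ v) + nrm (-((X - Y) *ᵥ v)) := by rw [hY]; exact nrm_add_le _ _
  _ = nrm (X *ᵥ v) + nrm ((X - Y) *ᵥ v) := by rw [nrm_neg]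
  _ ≤ sv X q + sv (X - Y) 1 * nrm v := by
      rw [hv2]
      exact add_le_add le_rfl (nrm_mulVec_le (X - Y) hq v)
  _ = sv X q + sv (X - Y) 1 := by rw [hv1, mul_one]

lemma sv_one_submatrix_le {s m n : ℕ} (hs : 1 ≤ s) (X : Matrix (Fin (s + m)) (Fin (s + n)) ℝ) :
    sv (X.submatrix (Fin.castAdd m) (Fin.castAdd n)) 1 ≤ sv X 1 := by
  set XA := X.submatrix (Fin.castAdd m) (Fin.castAdd n) with hXA
  obtain ⟨v, hv1, hv2⟩ := exists_unit XA 1 le_rfl hs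
  set w : Fin (s + n) → ℝ := Fin.append v 0 with hw
  have hpad1 : nsq w = nsq v := by
    rw [nsq, nsq, Fin.sum_univ_add]
    simp [hw]
  have hpad2 : ∀ i : Fin s, (X *ᵥ w) (Fin.castAdd m i) = (XA *ᵥ v) i := by
    intro i
    rw [Matrix.mulVec, Matrix.mulVec, dotProduct, dotProduct, Fin.sum_univ_add]
    simp [hw, hXA]
  have h1 : nsq (XA *ᵥ v) ≤ nsq (X *ᵥ w) := by
    rw [nsq, nsq, Fin.sum_univ_add]
    have : ∑ i : Fin s, ((XA *ᵥ v) i)^2 = ∑ i : Fin s, ((X *ᵥ w) (Fin.castAdd m i))^2 := by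
      refine Finset.sum_congr rfl fun i _ => ?_
      rw [hpad2]
    rw [this]
    exact le_add_of_nonneg_right (Finset.sum_nonneg fun i _ => sq_nonneg _)
  have h2 : nsq (X *ᵥ w) ≤ (sv X 1)^2 * nsq w := nsq_mulVec_le X (by omega) w
  have h3 : (sv XA 1)^2 ≤ (sv X 1)^2 := by
    have e1 : (sv XA 1)^2 = nsq (XA *ᵥ v) := by rw [← hv2, sq_nrm]
    have e2 : (sv X 1)^2 * nsq w = (sv X 1)^2 := by
      rw [hpad1, ← sq_nrm, hv1]; ring
    calc (sv XA 1)^2 = nsq (XA *ᵥ v) := e1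
    _ ≤ nsq (X *ᵥ w) := h1
    _ ≤ (sv X 1)^2 * nsq w := h2
    _ = (sv X 1)^2 := e2
  calc sv XA 1 = Real.sqrt ((sv XA 1)^2) := (Real.sqrt_sq (sv_nonneg XA 1)).symm
  _ ≤ Real.sqrt ((sv X 1)^2) := Real.sqrt_le_sqrt h3
  _ = sv X 1 := Real.sqrt_sq (sv_nonneg X 1)

end SVP2

namespace SVP3
open Matrix Finset SVP SVP2

variable {p' q' : ℕ}

def dm (p' : ℕ) (c : Fin q' → ℝ) : Matrix (Fin p') (Fin q') ℝ :=
  Matrix.of fun i j => if (i : ℕ) = (j : ℕ) then c j else 0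

lemma dm_mulVec (c : Fin q' → ℝ) (y : Fin q' → ℝ) (i : Fin p') :
    (dm p' c *ᵥ y) i = if h : (i : ℕ) < q' then c ⟨i, h⟩ * y ⟨i, h⟩ else 0 := by
  rw [Matrix.mulVec, dotProduct]
  split
  · next h =>
    rw [Finset.sum_eq_single (⟨(i : ℕ), h⟩ : Fin q')]
    · simp [dm]
    · intro b _ hb
      have : (i : ℕ) ≠ (b : ℕ) := by
        intro hc
        exact hb (by exact Fin.ext hc.symm)
      simp [dm, this]
    · simp
  · next h =>
    refine Finset.sum_eq_zero fun j _ => ?_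
    have : (i : ℕ) ≠ (j : ℕ) := by omega
    simp [dm, this]

/-- ℕ-indexed summand -/
noncomputable def gfun (q' : ℕ) (c y : Fin q' → ℝ) : ℕ → ℝ :=
  fun k => if h : k < q' then (c ⟨k, h⟩ * y ⟨k, h⟩)^2 else 0

lemma gfun_nonneg (c y : Fin q' → ℝ) (k : ℕ) : 0 ≤ gfun q' c y k := by
  rw [gfun]; split
  · exact sq_nonneg _
  · exact le_rfl

lemma nsq_dm (c y : Fin q' → ℝ) :
    nsq (dm p' c *ᵥ y) = ∑ k ∈ Finset.range p', gfun q' c y k := by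
  rw [nsq, ← Fin.sum_univ_eq_sum_range]
  refine Finset.sum_congr rfl fun i _ => ?_
  rw [dm_mulVec, gfun]
  split
  · rfl
  · simp

lemma sum_gfun_range_le (c y : Fin q' → ℝ) (N : ℕ) :
    ∑ k ∈ Finset.range N, gfun q' c y k ≤ ∑ j : Fin q', (c j * y j)^2 := by
  have h1 : ∑ k ∈ Finset.range N, gfun q' c y k
      ≤ ∑ k ∈ Finset.range (max N q'), gfun q' c y k :=
    Finset.sum_le_sum_of_subset_of_nonneg
      (Finset.range_subset_range.2 (le_max_left _ _))
      (fun k _ _ => gfun_nonneg c y k)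
  have h2 : ∑ k ∈ Finset.range (max N q'), gfun q' c y k
      = ∑ k ∈ Finset.range q', gfun q' c y k := by
    refine (Finset.sum_subset (Finset.range_subset_range.2 (le_max_right _ _)) ?_).symm
    intro k _ hk
    have : ¬ k < q' := by simpa using hk
    simp [gfun, this]
  have h3 : ∑ k ∈ Finset.range q', gfun q' c y k = ∑ j : Fin q', (c j * y j)^2 := by
    rw [← Fin.sum_univ_eq_sum_range]
    refine Finset.sum_congr rfl fun j _ => ?_
    simp [gfun, j.isLt]
  calc ∑ k ∈ Finset.range N, gfun q' c y k ≤ _ := h1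
  _ = _ := h2
  _ = _ := h3

lemma nsq_dm_le (c y : Fin q' → ℝ) :
    nsq (dm p' c *ᵥ y) ≤ ∑ j : Fin q', (c j * y j)^2 := by
  rw [nsq_dm]; exact sum_gfun_range_le c y p'

lemma nsq_dm_eq_of_support (c y : Fin q' → ℝ) (s0 : ℕ) (hs0p : s0 ≤ p') (hs0q : s0 ≤ q')
    (hy : ∀ j : Fin q', s0 ≤ (j : ℕ) → y j = 0) :
    nsq (dm p' c *ᵥ y) = ∑ j : Fin q', (c j * y j)^2 := by
  have hg0 : ∀ k, s0 ≤ k → gfun q' c y k = 0 := by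
    intro k hk
    rw [gfun]
    split
    · next h =>
      rw [hy ⟨k, h⟩ hk]
      ring
    · rfl
  have key : ∀ N : ℕ, s0 ≤ N → ∑ k ∈ Finset.range N, gfun q' c y k
      = ∑ k ∈ Finset.range s0, gfun q' c y k := by
    intro N hN
    refine (Finset.sum_subset (Finset.range_subset_range.2 hN) ?_).symm
    intro k _ hk
    exact hg0 k (by simpa using hk)
  have h3 : ∑ k ∈ Finset.range q', gfun q' c y k = ∑ j : Fin q', (c j * y j)^2 := by
    rw [← Fin.sum_univ_eq_sum_range]
    refine Finset.sum_congr rfl fun j _ => ?_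
    simp [gfun, j.isLt]
  rw [nsq_dm, key p' hs0p, ← key q' hs0q, h3]

lemma nsq_mulVec_orth {p' : ℕ} (U : Matrix (Fin p') (Fin p') ℝ) (hU : Uᵀ * U = 1)
    (x : Fin p' → ℝ) : nsq (U *ᵥ x) = nsq x := by
  rw [nsq_mulVec_dot, Matrix.conjTranspose_eq_transpose_of_trivial, hU, Matrix.one_mulVec]
  simp [nsq, dotProduct, pow_two]

end SVP3

namespace SVP4
open Matrix Finset SVP SVP2 SVP3

def ofE {p : ℕ} (x : EuclideanSpace ℝ (Fin p)) : Fin p → ℝ := x.ofLp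

lemma toE_ofE {p : ℕ} (x : EuclideanSpace ℝ (Fin p)) : toE (ofE x) = x := rfl

lemma ofE_ne_zero {p : ℕ} {x : EuclideanSpace ℝ (Fin p)} (hx : x ≠ 0) : ofE x ≠ 0 :=
  fun h => hx (by rw [← toE_ofE x, h]; simp [toE])

lemma inner_eq_zero_of_mem_span {E : Type*} [NormedAddCommGroup E] [InnerProductSpace ℝ E]
    (z : E) (Sset : Set E) (h : ∀ y ∈ Sset, (inner ℝ z y : ℝ) = 0)
    {x : E} (hx : x ∈ Submodule.span ℝ Sset) : (inner ℝ z x : ℝ) = 0 := by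
  induction hx using Submodule.span_induction with
  | mem y hy => exact h y hy
  | zero => simp
  | add a b _ _ ha hb => rw [inner_add_right, ha, hb, add_zero]
  | smul t a _ ha => rw [real_inner_smul_right, ha, mul_zero]

lemma sv_eq_svf {p q : ℕ} (A : Matrix (Fin p) (Fin q) ℝ) {k : ℕ} (h1 : 1 ≤ k) (h2 : k ≤ q)
    (idx : Fin q) (hidx : (idx : ℕ) = q - k) :
    sv A k = svf A (Tuple.sort (svf A) idx) := by
  have h : q - k < q := by omega
  rw [sv_def, dif_pos h]
  have : idx = ⟨q - k, h⟩ := Fin.ext (by simpa using hidx)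
  rw [this]

variable {m n s : ℕ}

lemma vT_orth {s n : ℕ} (V : Matrix (Fin (s + n)) (Fin (s + n)) ℝ) (hV : Vᵀ * V = 1)
    (v : Fin (s + n) → ℝ) : nsq (Vᵀ *ᵥ v) = nsq v := by
  refine nsq_mulVec_orth Vᵀ ?_ v
  rw [Matrix.transpose_transpose]
  exact mul_eq_one_comm.mp hV

lemma tail_bound (hs : 1 ≤ s)
    (M : Matrix (Fin (s + m)) (Fin (s + n)) ℝ)
    (U : Matrix (Fin (s + m)) (Fin (s + m)) ℝ) (hU : Uᵀ * U = 1)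
    (V : Matrix (Fin (s + n)) (Fin (s + n)) ℝ) (hV : Vᵀ * V = 1)
    (hSVD : M = U * (Matrix.of fun (i : Fin (s + m)) (j : Fin (s + n)) =>
      if (i : ℕ) = (j : ℕ) then sv M ((i : ℕ) + 1) else 0) * Vᵀ)
    (Mlg : Matrix (Fin (s + m)) (Fin (s + n)) ℝ)
    (hMlg : Mlg = U * (Matrix.of fun (i : Fin (s + m)) (j : Fin (s + n)) =>
      if (i : ℕ) = (j : ℕ) ∧ (i : ℕ) < s then sv M ((i : ℕ) + 1) else 0) * Vᵀ) :
    sv (Mlg - M) 1 ≤ sv M (s + 1) := by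
  set sg : ℕ → ℝ := sv M with hsg
  set c' : Fin (s + n) → ℝ := fun j => if (j : ℕ) < s then 0 else -(sg ((j : ℕ) + 1)) with hc'
  have hDM : Mlg - M = U * dm (s + m) c' * Vᵀ := by
    rw [hMlg]
    conv_lhs => rw [hSVD]
    rw [← Matrix.sub_mul, ← Matrix.mul_sub]
    congr 2
    ext i j
    by_cases hij : (i : ℕ) = (j : ℕ)
    · by_cases hlt : (i : ℕ) < s
      · have hlt' : (j : ℕ) < s := by omega
        simp [dm, hij, hlt, hlt', hc']
      · have hlt' : ¬ (j : ℕ) < s := by omega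
        have hsv : sg ((i : ℕ) + 1) = sg ((j : ℕ) + 1) := by rw [hij]
        simp [dm, hij, hlt, hlt', hc', hsv]
    · simp [dm, hij]
  obtain ⟨v, hv1, hv2⟩ := exists_unit (Mlg - M) 1 le_rfl (by omega)
  rw [← hv2]
  have key : nrm ((Mlg - M) *ᵥ v) ≤ sg (s + 1) * nrm v := by
    refine nrm_le_of_nsq_le (mul_nonneg (by rw [hsg]; exact sv_nonneg M (s + 1)) (nrm_nonneg v)) ?_
    rw [mul_pow, sq_nrm]
    have hmv : (Mlg - M) *ᵥ v = U *ᵥ (dm (s + m) c' *ᵥ (Vᵀ *ᵥ v)) := by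
      rw [hDM, Matrix.mulVec_mulVec, Matrix.mulVec_mulVec]
    rw [hmv, nsq_mulVec_orth U hU]
    set y : Fin (s + n) → ℝ := Vᵀ *ᵥ v with hy
    calc nsq (dm (s + m) c' *ᵥ y) ≤ ∑ j : Fin (s + n), (c' j * y j)^2 := nsq_dm_le c' y
    _ ≤ ∑ j : Fin (s + n), (sg (s + 1))^2 * (y j)^2 := by
        refine Finset.sum_le_sum fun j _ => ?_
        rw [mul_pow]
        refine mul_le_mul_of_nonneg_right ?_ (sq_nonneg _)
        by_cases hlt : (j : ℕ) < s
        · simp [hc', hlt, sq_nonneg]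
        · have h1 : (c' j)^2 = (sg ((j : ℕ) + 1))^2 := by
            simp [hc', hlt]
          rw [h1, hsg]
          refine pow_le_pow_left₀ (sv_nonneg M _) ?_ 2
          exact sv_antitone M (by omega) (by omega)
    _ = (sg (s + 1))^2 * nsq y := by rw [nsq, Finset.mul_sum]
    _ = (sg (s + 1))^2 * nsq v := by rw [vT_orth V hV]
  calc nrm ((Mlg - M) *ᵥ v) ≤ sg (s + 1) * nrm v := key
  _ = sg (s + 1) := by rw [hv1, mul_one]

set_option maxHeartbeats 1000000 in
lemma weyl_s (hs : 1 ≤ s)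
    (M B : Matrix (Fin (s + m)) (Fin (s + n)) ℝ)
    (U : Matrix (Fin (s + m)) (Fin (s + m)) ℝ) (hU : Uᵀ * U = 1)
    (V : Matrix (Fin (s + n)) (Fin (s + n)) ℝ) (hV : Vᵀ * V = 1)
    (hSVD : M = U * (Matrix.of fun (i : Fin (s + m)) (j : Fin (s + n)) =>
      if (i : ℕ) = (j : ℕ) then sv M ((i : ℕ) + 1) else 0) * Vᵀ) :
    sv M s ≤ sv B s + sv (M - B) 1 := by
  classical
  set sg : ℕ → ℝ := sv M with hsg
  -- columns of V
  have horthfull : ∀ j j' : Fin (s + n),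
      (inner ℝ (toE (fun i => V i j)) (toE (fun i => V i j')) : ℝ) = if j = j' then 1 else 0 := by
    intro j j'
    have h1 : (inner ℝ (toE (fun i => V i j)) (toE (fun i => V i j')) : ℝ)
        = ∑ i, V i j * V i j' := by
      simp [toE, PiLp.inner_apply, RCLike.inner_apply, mul_comm]
    have h2 : (Vᵀ * V) j j' = ∑ i, V i j * V i j' := by
      simp [Matrix.mul_apply, Matrix.transpose_apply]
    rw [h1, ← h2, hV, Matrix.one_apply]
  have horthV : Orthonormal ℝ (fun j : Fin s => toE (fun i => V i (Fin.castAdd n j))) := by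
    rw [orthonormal_iff_ite]
    intro j j'
    rw [horthfull]
    by_cases h : j = j'
    · simp [h]
    · have hne : Fin.castAdd n j ≠ Fin.castAdd n j' := by
        intro hc
        exact h (Fin.ext (by
          have := congrArg (fun x : Fin (s + n) => (x : ℕ)) hc
          simpa using this))
      simp [h, hne]
  set WV : Submodule ℝ (EuclideanSpace ℝ (Fin (s + n))) :=
    Submodule.span ℝ (Set.range (fun j : Fin s => toE (fun i => V i (Fin.castAdd n j)))) with hWV
  have hWVrank : Module.finrank ℝ WV = s := by
    rw [hWV, finrank_span_eq_card horthV.linearIndependent, Fintype.card_fin]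
  -- eigenvectors of B with small singular values
  have horthB : Orthonormal ℝ
      (fun i : Fin (n + 1) => (evecs B) (Tuple.sort (svf B) ⟨(i : ℕ), by omega⟩)) := by
    refine (evecs B).orthonormal.comp _ ?_
    intro a b hab
    have h1 := (Tuple.sort (svf B)).injective hab
    have h2 := congrArg (fun x : Fin (s + n) => (x : ℕ)) h1
    exact Fin.ext (by simpa using h2)
  set WB : Submodule ℝ (EuclideanSpace ℝ (Fin (s + n))) :=
    Submodule.span ℝ (Set.range
      (fun i : Fin (n + 1) => (evecs B) (Tuple.sort (svf B) ⟨(i : ℕ), by omega⟩))) with hWB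
  have hWBrank : Module.finrank ℝ WB = n + 1 := by
    rw [hWB, finrank_span_eq_card horthB.linearIndependent, Fintype.card_fin]
  -- intersection is nontrivial
  have hne : WV ⊓ WB ≠ ⊥ := by
    intro hbot
    have hsup := Submodule.finrank_sup_add_finrank_inf_eq WV WB
    rw [hbot, finrank_bot, add_zero, hWVrank, hWBrank] at hsup
    have hle : Module.finrank ℝ ↥(WV ⊔ WB) ≤ s + n := by
      have h := Submodule.finrank_le (WV ⊔ WB)
      simpa [finrank_euclideanSpace_fin] using h
    omega
  obtain ⟨x, hx, hx0⟩ := Submodule.exists_mem_ne_zero_of_ne_bot hne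
  have hxV : x ∈ WV := hx.1
  have hxB : x ∈ WB := hx.2
  set vf : Fin (s + n) → ℝ := ofE x with hvf
  have hvf0 : vf ≠ 0 := ofE_ne_zero hx0
  have htoE : toE vf = x := toE_ofE x
  -- Claim 1: coordinates of Vᵀ vf vanish from s on
  have claim1 : ∀ j : Fin (s + n), s ≤ (j : ℕ) → (Vᵀ *ᵥ vf) j = 0 := by
    intro j hj
    have hrew : (Vᵀ *ᵥ vf) j = (inner ℝ (toE (fun i => V i j)) x : ℝ) := by
      rw [← htoE]
      simp [toE, PiLp.inner_apply, RCLike.inner_apply, Matrix.mulVec,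
        dotProduct, Matrix.transpose_apply, mul_comm]
    rw [hrew]
    refine inner_eq_zero_of_mem_span _ _ ?_ hxV
    rintro y ⟨j', rfl⟩
    rw [horthfull]
    have hne' : j ≠ Fin.castAdd n j' := by
      intro hc
      have := congrArg (fun x : Fin (s + n) => (x : ℕ)) hc
      simp at this
      omega
    simp [hne']
  -- Claim 2: coefficients of vf in eigenbasis of B vanish off the chosen set
  have claim2 : ∀ j : Fin (s + n),
      (∀ i : Fin (n + 1), Tuple.sort (svf B) ⟨(i : ℕ), by omega⟩ ≠ j) → coeff B vf j = 0 := by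
    intro j hj
    have hrew : coeff B vf j = (inner ℝ ((evecs B) j) x : ℝ) := by
      rw [coeff, (evecs B).repr_apply_apply, htoE]
    rw [hrew]
    refine inner_eq_zero_of_mem_span _ _ ?_ hxB
    rintro y ⟨i, rfl⟩
    have hne' : j ≠ Tuple.sort (svf B) ⟨(i : ℕ), by omega⟩ := fun hc => hj i hc.symm
    have h := orthonormal_iff_ite.mp (evecs B).orthonormal j (Tuple.sort (svf B) ⟨(i : ℕ), by omega⟩)
    simpa [hne'] using h
  -- Claim 3: upper bound for B on vf
  have claim3 : nsq (B *ᵥ vf) ≤ (sv B s)^2 * nsq vf := by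
    rw [nsq_mulVec, nsq_eq_sum_coeff B vf, Finset.mul_sum]
    refine Finset.sum_le_sum fun j _ => ?_
    by_cases hj : ∀ i : Fin (n + 1), Tuple.sort (svf B) ⟨(i : ℕ), by omega⟩ ≠ j
    · rw [claim2 j hj]
      simp
    · push_neg at hj
      obtain ⟨i, hi⟩ := hj
      refine mul_le_mul_of_nonneg_right ?_ (sq_nonneg _)
      have hsv : sv B s = svf B (Tuple.sort (svf B) ⟨n, by omega⟩) :=
        sv_eq_svf B hs (by omega) ⟨n, by omega⟩ (by simp)
      have hle : svf B j ≤ sv B s := by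
        rw [hsv, ← hi]
        exact Tuple.monotone_sort (svf B) (by
          show ((i : ℕ) : ℕ) ≤ n
          omega)
      calc evals B j = (svf B j)^2 := (sq_svf B j).symm
      _ ≤ (sv B s)^2 := pow_le_pow_left₀ (svf_nonneg B j) hle 2
  -- Claim 4: lower bound for M on vf
  have claim4 : (sg s)^2 * nsq vf ≤ nsq (M *ᵥ vf) := by
    have hDof : (Matrix.of fun (i : Fin (s + m)) (j : Fin (s + n)) =>
        if (i : ℕ) = (j : ℕ) then sg ((i : ℕ) + 1) else 0)
        = dm (s + m) (fun j : Fin (s + n) => sg ((j : ℕ) + 1)) := by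
      ext i j
      by_cases hij : (i : ℕ) = (j : ℕ)
      · simp [dm, hij]
      · simp [dm, hij]
    have hmv : M *ᵥ vf = U *ᵥ (dm (s + m) (fun j : Fin (s + n) => sg ((j : ℕ) + 1))
        *ᵥ (Vᵀ *ᵥ vf)) := by
      conv_lhs => rw [hSVD]
      rw [hDof, Matrix.mulVec_mulVec, Matrix.mulVec_mulVec]
    rw [hmv, nsq_mulVec_orth U hU]
    set y : Fin (s + n) → ℝ := Vᵀ *ᵥ vf with hy
    have heq : nsq (dm (s + m) (fun j : Fin (s + n) => sg ((j : ℕ) + 1)) *ᵥ y)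
        = ∑ j : Fin (s + n), (sg ((j : ℕ) + 1) * y j)^2 :=
      nsq_dm_eq_of_support _ y s (by omega) (by omega) claim1
    rw [heq]
    have hnsqy : nsq y = nsq vf := vT_orth V hV vf
    calc (sg s)^2 * nsq vf = ∑ j : Fin (s + n), (sg s)^2 * (y j)^2 := by
          rw [← Finset.mul_sum, ← nsq, hnsqy]
    _ ≤ ∑ j : Fin (s + n), (sg ((j : ℕ) + 1) * y j)^2 := by
        refine Finset.sum_le_sum fun j _ => ?_
        by_cases hj : (j : ℕ) < s
        · rw [mul_pow]
          refine mul_le_mul_of_nonneg_right ?_ (sq_nonneg _)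
          rw [hsg]
          refine pow_le_pow_left₀ (sv_nonneg M s) ?_ 2
          exact sv_antitone M (by omega) (by omega)
        · rw [claim1 j (by omega)]
          simp
  -- combine
  have hnrmpos : 0 < nrm vf := nrm_pos_of_ne_zero hvf0
  have hM_le : sg s * nrm vf ≤ nrm (M *ᵥ vf) := by
    refine le_nrm_of_le_nsq (mul_nonneg (by rw [hsg]; exact sv_nonneg M s) (nrm_nonneg vf)) ?_
    rw [mul_pow, sq_nrm]
    exact claim4
  have hB_le : nrm (B *ᵥ vf) ≤ sv B s * nrm vf := by
    refine nrm_le_of_nsq_le (mul_nonneg (sv_nonneg B s) (nrm_nonneg vf)) ?_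
    rw [mul_pow, sq_nrm]
    exact claim3
  have hsplit : M *ᵥ vf = B *ᵥ vf + (M - B) *ᵥ vf := by
    rw [Matrix.sub_mulVec]
    abel
  have htri : nrm (M *ᵥ vf) ≤ nrm (B *ᵥ vf) + nrm ((M - B) *ᵥ vf) := by
    rw [hsplit]
    exact nrm_add_le _ _
  have hMB : nrm ((M - B) *ᵥ vf) ≤ sv (M - B) 1 * nrm vf :=
    nrm_mulVec_le (M - B) (by omega) vf
  have hfinal : sg s * nrm vf ≤ (sv B s + sv (M - B) 1) * nrm vf := by
    calc sg s * nrm vf ≤ nrm (M *ᵥ vf) := hM_le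
    _ ≤ nrm (B *ᵥ vf) + nrm ((M - B) *ᵥ vf) := htri
    _ ≤ sv B s * nrm vf + sv (M - B) 1 * nrm vf := add_le_add hB_le hMB
    _ = (sv B s + sv (M - B) 1) * nrm vf := by ring
  exact le_of_mul_le_mul_right hfinal hnrmpos

end SVP4


open SVP SVP2 SVP3 SVP4

/-- under assumptions (1)–(3) on the approximate rank-`s`
decomposition `M ≈ G * S`,
`(σ_s(M) − e_s)/(β²γ) − e_s − σ_{s+1}(M) ≤ σ_s(A_lg)`, where `A_lg` is the
top-left `s×s` block of the best rank-`s` approximation `M_lg` of `M`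
(given by the truncated SVD of `M = U Σ Vᵀ`). -/
theorem stmt6 (m n s : ℕ) (hs : 1 ≤ s) (hm : 1 ≤ m) (hn : 1 ≤ n)
    (M : Matrix (Fin (s + m)) (Fin (s + n)) ℝ)
    (G : Matrix (Fin (s + m)) (Fin s) ℝ) (S : Matrix (Fin s) (Fin (s + n)) ℝ)
    (es : ℝ) (hes : sv (M - G * S) 1 ≤ es)
    (GA : Matrix (Fin s) (Fin s) ℝ) (hGAdef : GA = G.submatrix (Fin.castAdd m) id)
    (SA : Matrix (Fin s) (Fin s) ℝ) (hSAdef : SA = S.submatrix id (Fin.castAdd n))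
    (h1 : 0 < sv (G * S) s)
    (γ : ℝ) (hγ : 1 ≤ γ) (h2 : sv G s * sv S s = sv (G * S) s / γ)
    (β : ℝ) (hβ : 1 ≤ β) (h3G : sv G s / β ≤ sv GA s) (h3S : sv S s / β ≤ sv SA s)
    -- the (full) SVD of M:
    (U : Matrix (Fin (s + m)) (Fin (s + m)) ℝ) (hU : Uᵀ * U = 1)
    (V : Matrix (Fin (s + n)) (Fin (s + n)) ℝ) (hV : Vᵀ * V = 1)
    (hSVD : M = U * (Matrix.of fun (i : Fin (s + m)) (j : Fin (s + n)) =>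
      if (i : ℕ) = (j : ℕ) then sv M ((i : ℕ) + 1) else 0) * Vᵀ)
    -- the best rank-s approximation of M, by truncating its SVD:
    (Mlg : Matrix (Fin (s + m)) (Fin (s + n)) ℝ)
    (hMlg : Mlg = U * (Matrix.of fun (i : Fin (s + m)) (j : Fin (s + n)) =>
      if (i : ℕ) = (j : ℕ) ∧ (i : ℕ) < s then sv M ((i : ℕ) + 1) else 0) * Vᵀ)
    (Alg : Matrix (Fin s) (Fin s) ℝ)
    (hAlg : Alg = Mlg.submatrix (Fin.castAdd m) (Fin.castAdd n)) :
    (sv M s - es) / (β ^ 2 * γ) - es - sv M (s + 1) ≤ sv Alg s := by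
  have hq1 : 1 ≤ s + n := by omega
  have es0 : 0 ≤ es := le_trans (sv_nonneg _ 1) hes
  have hβpos : (0:ℝ) < β := by linarith
  have hγpos : (0:ℝ) < γ := by linarith
  have hβγ : (0:ℝ) < β ^ 2 * γ := by positivity
  -- Weyl: σ_s(M) ≤ σ_s(GS) + e_s
  have w1 : sv M s ≤ sv (G * S) s + sv (M - G * S) 1 := weyl_s hs M (G * S) U hU V hV hSVD
  have w1' : sv M s - es ≤ sv (G * S) s := by linarith
  -- tail: ‖Mlg − M‖ ≤ σ_{s+1}(M)
  have tb : sv (Mlg - M) 1 ≤ sv M (s + 1) := tail_bound hs M U hU V hV hSVD Mlg hMlg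
  -- triangle for the spectral norm
  have tri : sv (Mlg - G * S) 1 ≤ sv (Mlg - M) 1 + sv (M - G * S) 1 := by
    have h := sv_one_triangle (Mlg - M) (M - G * S) hq1
    rwa [sub_add_sub_cancel] at h
  -- block: Alg − GA·SA is a submatrix of Mlg − G·S
  have hsubm : Alg - GA * SA = (Mlg - G * S).submatrix (Fin.castAdd m) (Fin.castAdd n) := by
    ext i j
    simp [hAlg, hGAdef, hSAdef, Matrix.sub_apply, Matrix.submatrix_apply, Matrix.mul_apply]
  have blok : sv (Alg - GA * SA) 1 ≤ sv (Mlg - G * S) 1 := by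
    rw [hsubm]
    exact sv_one_submatrix_le hs _
  -- smallest singular value inequalities on s×s blocks
  have pert : sv (GA * SA) s ≤ sv Alg s + sv (Alg - GA * SA) 1 := sv_smin_sub_le Alg (GA * SA) hs
  have mins : sv GA s * sv SA s ≤ sv (GA * SA) s := sv_smin_mul GA SA hs
  have prod : (sv G s / β) * (sv S s / β) ≤ sv GA s * sv SA s :=
    mul_le_mul h3G h3S (div_nonneg (sv_nonneg S s) (le_of_lt hβpos)) (sv_nonneg GA s)
  have eq1 : (sv G s / β) * (sv S s / β) = sv (G * S) s / (β ^ 2 * γ) := by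
    rw [div_mul_div_comm, h2, div_div, pow_two]
    congr 1
    ring
  have mono : (sv M s - es) / (β ^ 2 * γ) ≤ sv (G * S) s / (β ^ 2 * γ) := by
    gcongr
  have key : sv (G * S) s / (β ^ 2 * γ) ≤ sv Alg s + sv M (s + 1) + es := by
    calc sv (G * S) s / (β ^ 2 * γ) = (sv G s / β) * (sv S s / β) := eq1.symm
    _ ≤ sv GA s * sv SA s := prod
    _ ≤ sv (GA * SA) s := mins
    _ ≤ sv Alg s + sv (Alg - GA * SA) 1 := pert
    _ ≤ sv Alg s + sv (Mlg - G * S) 1 := by linarith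
    _ ≤ sv Alg s + (sv (Mlg - M) 1 + sv (M - G * S) 1) := by linarith
    _ ≤ sv Alg s + sv M (s + 1) + es := by linarith
  linarith
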